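/- Let m, m₁ ∈ {0,…,N−1} with m > m₁, set δ_f = (m − m₁)/T, let k ∈ {0,…,C−1}, ν ∈ ℝ, and let τ satisfy k·T_SC ≤ τ < k·T_SC + min{T_SC − t_{m₁,1}, t_{m,1}}. Set q̃ = k + 1, E = 2·c̃₁·τ − k/Δt − ν, and Ẽ = E − 1/Δt. Then the cross-ambiguity function between the m-th and m₁-th AFDM chirp subcarriers admits the closed form A_{φ_m,φ_{m₁}}(τ, ν) = exp(2πi·(c₂·(m² − m₁²) + (m₁/T)·τ − c̃₁·τ²)) · [ Σ_{i=0}^{C−q̃} exp(−2πi·(i/Δt)·τ) · ( I(E + δ_f, t_{m₁,i} + τ, t_{m,i+q̃}) + I(Ẽ + δ_f, t_{m,i+q̃}, t_{m₁,i+1} + τ) ) + exp(−2πi·((C−q̃+1)/Δt)·τ) · I(E + δ_f, t_{m₁,C−q̃+1} + τ, T) ]. -/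

import Mathlib

open MeasureTheory Complex Real

noncomputable section

namespace AFDM

variable (N C : ℕ) (Δt : ℝ)

/-- Frame duration `T = N·Δt`. -/
def T : ℝ := N * Δt

/-- Chirp rate parameter `c̃₁ = C/(2·T·Δt)`. -/
def ctil : ℝ := C / (2 * T N Δt * Δt)

/-- Subchirp duration `T_SC = T/C`. -/
def TSC : ℝ := T N Δt / C

/-- Spectrum wrapping points `t_{m,q}`: `t_{m,0} = 0`, `t_{m,q} = q·T/C − m·Δt/C` for
`q = 1,…,C`, and `t_{m,C+1} = T`. -/
def tp (m q : ℕ) : ℝ :=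
  if q = 0 then 0 else if q ≤ C then q * T N Δt / C - m * Δt / C else T N Δt

/-- Wrapping index function `q_m(t)`: equals `q` on `[t_{m,q}, t_{m,q+1})` for `t ∈ [0,T)`. -/
def qm (m : ℕ) (t : ℝ) : ℤ :=
  (((Finset.range (C + 1)).filter (fun q => tp N C Δt m q ≤ t)).card : ℤ) - 1

/-- The `m`-th continuous-time AFDM chirp subcarrier with parameter `c₂`:
`φ_m(t) = exp(2πi(c₂·m² + c̃₁·t² + (m/T)·t − q_m(t)·t/Δt))` on `[0,T)`, `0` otherwise. -/
def phi (c₂ : ℝ) (m : ℕ) (t : ℝ) : ℂ :=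
  if 0 ≤ t ∧ t < T N Δt then
    Complex.exp (2 * Real.pi * Complex.I *
      ((c₂ * (m : ℝ) ^ 2 + ctil N C Δt * t ^ 2 + ((m : ℝ) / T N Δt) * t
        - (qm N C Δt m t : ℝ) * t / Δt : ℝ) : ℂ))
  else 0

/-- The aperiodic ambiguity function `A_{a,b}(τ,ν) = ∫ a(t)·conj(b(t−τ))·exp(−2πiνt) dt`. -/
def AF (a b : ℝ → ℂ) (τ ν : ℝ) : ℂ :=
  ∫ t : ℝ, a t * (starRingEnd ℂ) (b (t - τ)) *
    Complex.exp (-(2 * Real.pi * Complex.I * ((ν * t : ℝ) : ℂ)))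

/-- The integral indicator `I(c, t₁, t₂)`. -/
def Iind (c t₁ t₂ : ℝ) : ℂ :=
  if c ≠ 0 then
    (Complex.exp (2 * Real.pi * Complex.I * ((c * t₂ : ℝ) : ℂ))
      - Complex.exp (2 * Real.pi * Complex.I * ((c * t₁ : ℝ) : ℂ))) /
      (2 * Real.pi * Complex.I * ((c : ℝ) : ℂ))
  else ((t₂ - t₁ : ℝ) : ℂ)


lemma T_pos (hN : 0 < N) (hΔt : 0 < Δt) : 0 < T N Δt := by
  have h : (0:ℝ) < N := by exact_mod_cast hN
  unfold T; exact mul_pos h hΔt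

lemma tp_zero (m : ℕ) : tp N C Δt m 0 = 0 := by simp [tp]

lemma tp_eq (m q : ℕ) (h1 : q ≠ 0) (h2 : q ≤ C) :
    tp N C Δt m q = (q:ℝ) * T N Δt / C - (m:ℝ) * Δt / C := by
  simp [tp, h1, h2]

lemma tp_top (m q : ℕ) (h : C < q) : tp N C Δt m q = T N Δt := by
  have h0 : q ≠ 0 := by omega
  have h1 : ¬ q ≤ C := by omega
  simp [tp, h0, h1]

lemma tp_nonneg (hC : 0 < C) (hΔt : 0 < Δt) {m : ℕ} (hm : m < N) (q : ℕ) :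
    0 ≤ tp N C Δt m q := by
  have hC0 : (0:ℝ) < C := by exact_mod_cast hC
  have hm0 : (m:ℝ) < N := by exact_mod_cast hm
  unfold tp T
  split_ifs with h1 h2
  · exact le_refl 0
  · have hq1 : (1:ℝ) ≤ q := by exact_mod_cast Nat.one_le_iff_ne_zero.mpr h1
    rw [sub_nonneg, div_le_div_iff₀ hC0 hC0]
    nlinarith [mul_pos (mul_pos (sub_pos.mpr hm0) hΔt) hC0, mul_nonneg (mul_nonneg (mul_nonneg (sub_nonneg.mpr hq1) (le_of_lt (lt_of_le_of_lt (Nat.cast_nonneg m) hm0))) hΔt.le) hC0.le]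
  · positivity

lemma tp_mono (hN : 0 < N) (hC : 0 < C) (hΔt : 0 < Δt) {m : ℕ} (hm : m < N) :
    Monotone (tp N C Δt m) := by
  have hC0 : (0:ℝ) < C := by exact_mod_cast hC
  have hm0 : (m:ℝ) < N := by exact_mod_cast hm
  apply monotone_nat_of_le_succ
  intro q
  rcases Nat.lt_or_ge q C with h | h
  · rcases Nat.eq_zero_or_pos q with rfl | hq
    · rw [tp_zero]; exact tp_nonneg N C Δt hC hΔt hm 1
    · rw [tp_eq N C Δt m q (by omega) (by omega), tp_eq N C Δt m (q+1) (by omega) (by omega)]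
      have hT0 : 0 < T N Δt := T_pos N Δt hN hΔt
      push_cast
      have h9 : 0 ≤ T N Δt / (C:ℝ) := by positivity
      have h8 : (q:ℝ) * T N Δt / C + T N Δt / C = ((q:ℝ)+1) * T N Δt / C := by ring
      linarith
  · rcases Nat.eq_or_lt_of_le h with rfl | h'
    · rw [tp_eq N C Δt m C (by omega) le_rfl, tp_top N C Δt m (C+1) (by omega)]
      have h2 : (C:ℝ) * T N Δt / C = T N Δt := by field_simp
      have h3 : 0 ≤ (m:ℝ) * Δt / C := by positivity
      linarith
    · rw [tp_top N C Δt m q h', tp_top N C Δt m (q+1) (by omega)]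

lemma qm_eq (hN : 0 < N) (hC : 0 < C) (hΔt : 0 < Δt) {m : ℕ} (hm : m < N) {j : ℕ}
    (hj : j ≤ C) {t : ℝ} (h1 : tp N C Δt m j ≤ t) (h2 : t < tp N C Δt m (j+1)) :
    qm N C Δt m t = (j : ℤ) := by
  have hmono := tp_mono N C Δt hN hC hΔt hm
  have hset : (Finset.range (C+1)).filter (fun q => tp N C Δt m q ≤ t)
      = Finset.range (j+1) := by
    ext q
    simp only [Finset.mem_filter, Finset.mem_range]
    constructor
    · rintro ⟨hq1, hq2⟩
      by_contra hq
      push_neg at hq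
      exact absurd hq2 (not_le.mpr (lt_of_lt_of_le h2 (hmono hq)))
    · intro hq
      exact ⟨by omega, le_trans (hmono (by omega : q ≤ j)) h1⟩
  unfold qm
  rw [hset, Finset.card_range]
  push_cast; ring

lemma norm_exp_two_pi_I (r : ℝ) : ‖Complex.exp (2 * Real.pi * Complex.I * (r:ℂ))‖ = 1 := by
  rw [show 2 * Real.pi * Complex.I * (r:ℂ) = ((2 * Real.pi * r : ℝ):ℂ) * Complex.I by
    push_cast; ring]
  rw [Complex.norm_exp_ofReal_mul_I]

lemma conj_exp_two_pi_I (r : ℝ) :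
    (starRingEnd ℂ) (Complex.exp (2 * Real.pi * Complex.I * (r:ℂ)))
      = Complex.exp (2 * Real.pi * Complex.I * ((-r : ℝ):ℂ)) := by
  rw [← Complex.exp_conj]
  congr 1
  simp only [map_mul, Complex.conj_I, Complex.conj_ofReal, map_ofNat, Complex.ofReal_neg]
  ring

lemma exp_two_pi_I_add (a b : ℝ) :
    Complex.exp (2 * Real.pi * Complex.I * (a:ℂ)) * Complex.exp (2 * Real.pi * Complex.I * (b:ℂ))
      = Complex.exp (2 * Real.pi * Complex.I * ((a+b : ℝ):ℂ)) := by
  rw [← Complex.exp_add]; congr 1; push_cast; ring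

lemma integral_exp_linear (c d a b : ℝ) :
    (∫ t in a..b, Complex.exp (2 * Real.pi * Complex.I * ((c * t + d : ℝ):ℂ)))
      = Complex.exp (2 * Real.pi * Complex.I * ((d:ℝ):ℂ)) * Iind c a b := by
  have h : ∀ t : ℝ, Complex.exp (2 * Real.pi * Complex.I * ((c * t + d : ℝ):ℂ))
      = Complex.exp (2 * Real.pi * Complex.I * ((d:ℝ):ℂ))
        * Complex.exp ((2 * Real.pi * Complex.I * (c:ℂ)) * (t:ℂ)) := by
    intro t; rw [← Complex.exp_add]; congr 1; push_cast; ring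
  simp only [h]
  rw [intervalIntegral.integral_const_mul]
  congr 1
  by_cases hc : c = 0
  · subst hc
    simp [Iind]
  · have hc' : 2 * Real.pi * Complex.I * (c:ℂ) ≠ 0 := by
      apply mul_ne_zero
      apply mul_ne_zero
      apply mul_ne_zero two_ne_zero
      · exact_mod_cast Complex.ofReal_ne_zero.mpr Real.pi_ne_zero
      · exact Complex.I_ne_zero
      · exact Complex.ofReal_ne_zero.mpr hc
    rw [integral_exp_mul_complex hc']
    unfold Iind
    rw [if_pos hc]
    congr 2 <;> push_cast <;> ring

lemma intervalIntegral_congr_Ioo {f g : ℝ → ℂ} {a b : ℝ} (hab : a ≤ b)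
    (h : Set.EqOn f g (Set.Ioo a b)) : (∫ x in a..b, f x) = ∫ x in a..b, g x := by
  rw [intervalIntegral.integral_of_le hab, intervalIntegral.integral_of_le hab,
    MeasureTheory.integral_Ioc_eq_integral_Ioo, MeasureTheory.integral_Ioc_eq_integral_Ioo]
  exact MeasureTheory.setIntegral_congr_fun measurableSet_Ioo h

lemma sum_pair (v : ℕ → ℂ) (n : ℕ) :
    ∑ j ∈ Finset.range (2*n), v j = ∑ i ∈ Finset.range n, (v (2*i) + v (2*i+1)) := by
  induction n with
  | zero => simp
  | succ n ih =>
    rw [Finset.sum_range_succ, ← ih, show 2*(n+1) = 2*n+1+1 by ring,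
      Finset.sum_range_succ, Finset.sum_range_succ]
    ring

lemma measurable_phi (c₂ : ℝ) (m : ℕ) : Measurable (phi N C Δt c₂ m) := by
  have hqm : Measurable (fun t : ℝ => (qm N C Δt m t : ℝ)) := by
    have he : (fun t : ℝ => (qm N C Δt m t : ℝ)) = fun t =>
        (∑ q ∈ Finset.range (C+1), if tp N C Δt m q ≤ t then (1:ℝ) else 0) - 1 := by
      funext t
      unfold qm
      rw [Finset.card_filter]
      push_cast
      ring
    rw [he]
    apply Measurable.sub _ measurable_const
    apply Finset.measurable_sum
    intro q _
    exact Measurable.ite measurableSet_Ici measurable_const measurable_const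
  unfold phi
  apply Measurable.ite
  · exact (measurableSet_Ici (a := (0:ℝ))).inter (measurableSet_Iio)
  · apply Complex.measurable_exp.comp
    apply Measurable.const_mul
    apply Complex.measurable_ofReal.comp
    apply Measurable.sub
    · apply Measurable.add
      · exact measurable_const.add ((measurable_id.pow_const 2).const_mul _)
      · exact measurable_id.const_mul _
    · exact (hqm.mul measurable_id).div_const _
  · exact measurable_const

lemma tp_eq' (m q : ℕ) (h1 : q ≠ 0) (h2 : q ≤ C) :
    tp N C Δt m q = (q:ℝ) * (T N Δt / C) - (m:ℝ) * (Δt / C) := by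
  rw [tp_eq N C Δt m q h1 h2]; ring

lemma tp_lb (hC : 0 < C) (hΔt : 0 < Δt) (m q : ℕ) (hq : q ≤ C) :
    (q:ℝ) * (T N Δt / C) - (m:ℝ) * (Δt / C) ≤ tp N C Δt m q := by
  have hC0 : (0:ℝ) < C := by exact_mod_cast hC
  rcases Nat.eq_zero_or_pos q with rfl | h
  · rw [tp_zero]
    have h1 : 0 ≤ (m:ℝ) * (Δt / C) := by positivity
    push_cast
    linarith
  · rw [tp_eq' N C Δt m q (by omega) hq]

lemma tp_ub (hN : 0 < N) (hC : 0 < C) (hΔt : 0 < Δt) (m q : ℕ) (hq : q ≤ C+1) :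
    tp N C Δt m q ≤ (q:ℝ) * (T N Δt / C) := by
  have hC0 : (0:ℝ) < C := by exact_mod_cast hC
  have hT0 : 0 < T N Δt := T_pos N Δt hN hΔt
  rcases Nat.eq_zero_or_pos q with rfl | h
  · rw [tp_zero]; push_cast; simp
  · rcases Nat.lt_or_ge q (C+1) with h2 | h2
    · rw [tp_eq' N C Δt m q (by omega) (by omega)]
      have h1 : 0 ≤ (m:ℝ) * (Δt / C) := by positivity
      linarith
    · have hqC : q = C+1 := by omega
      subst hqC
      rw [tp_top N C Δt m _ (by omega)]
      have h1 : (C:ℝ) * (T N Δt / C) = T N Δt := by field_simp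
      have h2 : 0 ≤ T N Δt / C := by positivity
      push_cast
      nlinarith

lemma norm_exp_neg_two_pi_I (r : ℝ) :
    ‖Complex.exp (-(2 * Real.pi * Complex.I * (r:ℂ)))‖ = 1 := by
  rw [show -(2 * Real.pi * Complex.I * (r:ℂ)) = 2 * Real.pi * Complex.I * ((-r : ℝ):ℂ) by
    push_cast; ring, norm_exp_two_pi_I]

lemma exp_split (x y : ℝ) :
    Complex.exp (2 * Real.pi * Complex.I * ((x - y : ℝ):ℂ))
      = Complex.exp (2 * Real.pi * Complex.I * (x:ℂ)) *
        Complex.exp (-(2 * Real.pi * Complex.I * (y:ℂ))) := by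
  rw [← Complex.exp_add]; congr 1; push_cast; ring

lemma norm_phi_le (c₂ : ℝ) (m : ℕ) (t : ℝ) : ‖phi N C Δt c₂ m t‖ ≤ 1 := by
  unfold phi
  split_ifs
  · rw [norm_exp_two_pi_I]
  · simp


set_option maxHeartbeats 2000000 in
/-- Closed form of the cross-ambiguity function between the `m`-th and `m₁`-th AFDM chirp
subcarriers (`m > m₁`, frequency difference `δ_f = (m − m₁)/T`) for `τ` in the `k`-th
subchirp window, with `q̃ = k + 1`, `E = 2·c̃₁·τ − k/Δt − ν` and `Ẽ = E − 1/Δt`. -/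
theorem caf_closed_form
    (N C : ℕ) (hN : 0 < N) (hNeven : Even N) (hC : 0 < C)
    (Δt : ℝ) (hΔt : 0 < Δt) (c₂ : ℝ) (m m₁ k : ℕ) (hm : m < N) (hm₁ : m₁ < N)
    (hmm₁ : m₁ < m) (hk : k < C) (ν τ : ℝ)
    (hτ1 : (k : ℝ) * TSC N C Δt ≤ τ)
    (hτ2 : τ < (k : ℝ) * TSC N C Δt +
      min (TSC N C Δt - tp N C Δt m₁ 1) (tp N C Δt m 1)) :
    AF (phi N C Δt c₂ m) (phi N C Δt c₂ m₁) τ ν =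
      Complex.exp (2 * Real.pi * Complex.I *
          ((c₂ * ((m : ℝ) ^ 2 - (m₁ : ℝ) ^ 2) + ((m₁ : ℝ) / T N Δt) * τ
            - ctil N C Δt * τ ^ 2 : ℝ) : ℂ)) *
        ((∑ i ∈ Finset.range (C - k),
            Complex.exp (-(2 * Real.pi * Complex.I * ((((i : ℝ) / Δt) * τ : ℝ) : ℂ))) *
              (Iind (2 * ctil N C Δt * τ - (k : ℝ) / Δt - ν + ((m : ℝ) - (m₁ : ℝ)) / T N Δt)
                  (tp N C Δt m₁ i + τ) (tp N C Δt m (i + (k + 1))) +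
                Iind (2 * ctil N C Δt * τ - (k : ℝ) / Δt - ν - 1 / Δt
                    + ((m : ℝ) - (m₁ : ℝ)) / T N Δt)
                  (tp N C Δt m (i + (k + 1))) (tp N C Δt m₁ (i + 1) + τ))) +
          Complex.exp (-(2 * Real.pi * Complex.I *
              (((((C - k : ℕ) : ℝ)) / Δt * τ : ℝ) : ℂ))) *
            Iind (2 * ctil N C Δt * τ - (k : ℝ) / Δt - ν + ((m : ℝ) - (m₁ : ℝ)) / T N Δt)
              (tp N C Δt m₁ (C - k) + τ) (T N Δt)) := by
  have hC0 : (0:ℝ) < C := by exact_mod_cast hC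
  have hN0 : (0:ℝ) < N := by exact_mod_cast hN
  have hT0 : 0 < T N Δt := T_pos N Δt hN hΔt
  have hmR : (m:ℝ) < N := by exact_mod_cast hm
  have hm₁R : (m₁:ℝ) < N := by exact_mod_cast hm₁
  have hmm₁R : (m₁:ℝ) < m := by exact_mod_cast hmm₁
  have hm1 : 1 ≤ m := by omega
  have hm1R : (1:ℝ) ≤ m := by exact_mod_cast hm1
  set n := C - k with hn
  have hkn : k + n = C := by omega
  have hn1 : 1 ≤ n := by omega
  have hknR : (k:ℝ) + (n:ℝ) = (C:ℝ) := by exact_mod_cast hkn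
  set s := T N Δt / C with hs
  set e := Δt / C with he
  have hs0 : 0 < s := by rw [hs]; positivity
  have he0 : 0 < e := by rw [he]; positivity
  have hTN : T N Δt = (N:ℝ) * Δt := rfl
  have hNe : (N:ℝ) * e = s := by rw [hs, he, hTN]; ring
  have hCs : (C:ℝ) * s = T N Δt := by rw [hs]; field_simp
  have hx : ((k:ℝ) + (n:ℝ)) * s = (C:ℝ) * s := by rw [hknR]
  have hms : (m:ℝ) * e < s := by nlinarith [mul_pos (sub_pos.mpr hmR) he0]
  have hm1s : (m₁:ℝ) * e < s := by nlinarith [mul_pos (sub_pos.mpr hm₁R) he0]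
  have hm₁m_e : (m₁:ℝ) * e < (m:ℝ) * e := by nlinarith [mul_pos (sub_pos.mpr hmm₁R) he0]
  have hme0 : 0 < (m:ℝ) * e := by nlinarith
  have hm₁e0 : 0 ≤ (m₁:ℝ) * e := by positivity
  -- τ bounds
  have hTSC : TSC N C Δt = s := rfl
  have htpm1 : tp N C Δt m 1 = 1 * s - (m:ℝ) * e := by
    rw [tp_eq' N C Δt m 1 one_ne_zero hC, ← hs, ← he]; push_cast; ring
  have htpm11 : tp N C Δt m₁ 1 = 1 * s - (m₁:ℝ) * e := by
    rw [tp_eq' N C Δt m₁ 1 one_ne_zero hC, ← hs, ← he]; push_cast; ring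
  have hτl : (k:ℝ) * s ≤ τ := by rw [← hTSC]; exact hτ1
  have hτu1 : τ < (k:ℝ) * s + (m₁:ℝ) * e := by
    have h1 := min_le_left (TSC N C Δt - tp N C Δt m₁ 1) (tp N C Δt m 1)
    have h2 : τ < (k:ℝ) * TSC N C Δt + (TSC N C Δt - tp N C Δt m₁ 1) :=
      lt_of_lt_of_le hτ2 (by linarith)
    rw [hTSC, htpm11] at h2
    linarith
  have hτu2 : τ + (m:ℝ) * e < ((k:ℝ) + 1) * s := by
    have h1 := min_le_right (TSC N C Δt - tp N C Δt m₁ 1) (tp N C Δt m 1)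
    have h2 : τ < (k:ℝ) * TSC N C Δt + tp N C Δt m 1 :=
      lt_of_lt_of_le hτ2 (by linarith)
    rw [hTSC, htpm1] at h2
    linarith
  have hτ0 : 0 ≤ τ := le_trans (by positivity) hτl
  have hτT : τ < T N Δt := by
    have hk1C : (k:ℝ) + 1 ≤ C := by exact_mod_cast hk
    nlinarith [mul_le_mul_of_nonneg_right hk1C hs0.le]
  -- the integrand
  set F : ℝ → ℂ := fun t => phi N C Δt c₂ m t *
      (starRingEnd ℂ) (phi N C Δt c₂ m₁ (t - τ)) *
      Complex.exp (-(2 * Real.pi * Complex.I * ((ν * t : ℝ) : ℂ))) with hF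
  set P := Complex.exp (2 * Real.pi * Complex.I *
      ((c₂ * ((m : ℝ) ^ 2 - (m₁ : ℝ) ^ 2) + ((m₁ : ℝ) / T N Δt) * τ
        - ctil N C Δt * τ ^ 2 : ℝ) : ℂ)) with hP
  set c1 := 2 * ctil N C Δt * τ - (k : ℝ) / Δt - ν + ((m : ℝ) - (m₁ : ℝ)) / T N Δt with hc1
  set c2v := 2 * ctil N C Δt * τ - (k : ℝ) / Δt - ν - 1 / Δt
      + ((m : ℝ) - (m₁ : ℝ)) / T N Δt with hc2v
  -- support of the integrand
  have hsupp : ∀ t ∉ Set.Ico τ (T N Δt), F t = 0 := by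
    intro t ht
    simp only [Set.mem_Ico, not_and_or, not_le, not_lt] at ht
    rcases ht with h | h
    · have h2 : phi N C Δt c₂ m₁ (t - τ) = 0 := by
        unfold phi
        rw [if_neg]
        push_neg
        intro h3
        linarith
      simp only [hF, h2, map_zero, mul_zero, zero_mul]
    · have h2 : phi N C Δt c₂ m t = 0 := by
        unfold phi
        rw [if_neg]
        push_neg
        intro h3
        linarith
      simp only [hF, h2, zero_mul]
  have hFmeas : Measurable F := by
    rw [hF]
    refine Measurable.mul (Measurable.mul ?_ ?_) ?_
    · exact measurable_phi N C Δt c₂ m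
    · exact (RCLike.continuous_conj.measurable).comp
        ((measurable_phi N C Δt c₂ m₁).comp (measurable_id.sub measurable_const))
    · apply Complex.measurable_exp.comp
      apply Measurable.neg
      apply Measurable.const_mul
      exact Complex.measurable_ofReal.comp (measurable_id.const_mul ν)
  have hFnorm : ∀ t, ‖F t‖ ≤ 1 := by
    intro t
    rw [hF]
    simp only [norm_mul]
    have e1 := norm_phi_le N C Δt c₂ m t
    have e2 : ‖(starRingEnd ℂ) (phi N C Δt c₂ m₁ (t - τ))‖ ≤ 1 := by
      rw [RCLike.norm_conj]
      exact norm_phi_le N C Δt c₂ m₁ (t - τ)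
    have e3 : ‖Complex.exp (-(2 * Real.pi * Complex.I * ((ν * t : ℝ) : ℂ)))‖ = 1 :=
      norm_exp_neg_two_pi_I (ν * t)
    rw [e3, mul_one]
    calc ‖phi N C Δt c₂ m t‖ * ‖(starRingEnd ℂ) (phi N C Δt c₂ m₁ (t - τ))‖
        ≤ 1 * 1 := by
          apply mul_le_mul e1 e2 (norm_nonneg _) zero_le_one
      _ = 1 := by norm_num
  have hint : ∀ a b : ℝ, IntervalIntegrable F MeasureTheory.volume a b := by
    have h : ∀ a b : ℝ, MeasureTheory.IntegrableOn F (Set.Ioc a b) := by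
      intro a b
      apply MeasureTheory.Integrable.mono' (g := fun _ => (1:ℝ))
      · exact (MeasureTheory.integrableOn_const_iff).mpr (Or.inr measure_Ioc_lt_top)
      · exact hFmeas.aestronglyMeasurable.restrict
      · exact MeasureTheory.ae_of_all _ hFnorm
    exact fun a b => ⟨h a b, h b a⟩
  -- partition points
  set u : ℕ → ℝ := fun j => if j ≤ 2*n then
      (if j % 2 = 0 then tp N C Δt m₁ (j/2) + τ else tp N C Δt m (j/2 + (k+1)))
    else T N Δt with hu
  have hue : ∀ i, i ≤ n → u (2*i) = tp N C Δt m₁ i + τ := by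
    intro i hi
    have h2 : 2*i ≤ 2*n := by omega
    have h3 : (2*i) % 2 = 0 := by omega
    have h4 : (2*i) / 2 = i := by omega
    simp only [hu, if_pos h2, h3, h4, if_true, if_pos]
  have huo : ∀ i, i < n → u (2*i+1) = tp N C Δt m (i + (k+1)) := by
    intro i hi
    have h2 : 2*i+1 ≤ 2*n := by omega
    have h3 : (2*i+1) % 2 = 1 := by omega
    have h4 : (2*i+1) / 2 = i := by omega
    simp only [hu, if_pos h2, h3, h4]
    norm_num
  have hulast : u (2*n+1) = T N Δt := by
    have h2 : ¬ (2*n+1 ≤ 2*n) := by omega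
    simp only [hu, if_neg h2]
  have hu0 : u 0 = τ := by
    have := hue 0 (by omega)
    simpa [tp_zero] using this
  -- decompose
  have h0 : AF (phi N C Δt c₂ m) (phi N C Δt c₂ m₁) τ ν = ∫ t : ℝ, F t := rfl
  have hdecomp : AF (phi N C Δt c₂ m) (phi N C Δt c₂ m₁) τ ν
      = ∑ j ∈ Finset.range (2*n+1), ∫ t in (u j)..(u (j+1)), F t := by
    rw [h0, ← MeasureTheory.setIntegral_eq_integral_of_forall_compl_eq_zero hsupp,
      MeasureTheory.integral_Ico_eq_integral_Ioo, ← MeasureTheory.integral_Ioc_eq_integral_Ioo,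
      ← intervalIntegral.integral_of_le (le_of_lt hτT), ← hu0, ← hulast]
    exact (intervalIntegral.sum_integral_adjacent_intervals
      (fun j _ => hint (u j) (u (j+1)))).symm
  -- piece 1
  have piece1 : ∀ i, i < n → (∫ t in (tp N C Δt m₁ i + τ)..(tp N C Δt m (i + (k+1))), F t)
      = P * (Complex.exp (-(2 * Real.pi * Complex.I * ((((i : ℝ) / Δt) * τ : ℝ) : ℂ)))
          * Iind c1 (tp N C Δt m₁ i + τ) (tp N C Δt m (i + (k + 1)))) := by
    intro i hi
    have hik1 : i + (k+1) ≤ C := by omega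
    have hBv : tp N C Δt m (i + (k+1)) = ((i:ℝ) + ((k:ℝ)+1)) * s - (m:ℝ) * e := by
      rw [tp_eq' N C Δt m _ (by omega) hik1, ← hs, ← he]
      push_cast; ring
    have hAub : tp N C Δt m₁ i ≤ (i:ℝ) * s := by
      have h := tp_ub N C Δt hN hC hΔt m₁ i (by omega)
      rw [← hs] at h; exact h
    have hAlb : (i:ℝ) * s - (m₁:ℝ) * e ≤ tp N C Δt m₁ i := by
      have h := tp_lb N C Δt hC hΔt m₁ i (by omega)
      rw [← hs, ← he] at h; exact h
    have hA0 : 0 ≤ tp N C Δt m₁ i := tp_nonneg N C Δt hC hΔt hm₁ i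
    have hab : tp N C Δt m₁ i + τ ≤ tp N C Δt m (i + (k+1)) := by
      rw [hBv]; linarith
    have hikC : ((i:ℝ) + ((k:ℝ)+1)) ≤ C := by exact_mod_cast hik1
    have heq : Set.EqOn F (fun t => Complex.exp (2 * Real.pi * Complex.I *
        ((c1 * t + (c₂ * ((m : ℝ) ^ 2 - (m₁ : ℝ) ^ 2) + ((m₁ : ℝ) / T N Δt) * τ
          - ctil N C Δt * τ ^ 2 - ((i : ℝ) / Δt) * τ) : ℝ) : ℂ)))
        (Set.Ioo (tp N C Δt m₁ i + τ) (tp N C Δt m (i + (k+1)))) := by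
      intro t ht
      obtain ⟨ht1, ht2⟩ := ht
      rw [hBv] at ht2
      have hq1 : qm N C Δt m t = ((i + k : ℕ) : ℤ) := by
        apply qm_eq N C Δt hN hC hΔt hm (by omega : i + k ≤ C)
        · rcases Nat.eq_zero_or_pos (i+k) with h0 | h0
          · rw [h0, tp_zero]
            linarith
          · have hv : tp N C Δt m (i+k) = ((i:ℝ) + (k:ℝ)) * s - (m:ℝ) * e := by
              rw [tp_eq' N C Δt m _ (by omega) (by omega), ← hs, ← he]
              push_cast; ring
            rw [hv]
            linarith
        · rw [show i + k + 1 = i + (k+1) from by omega, hBv]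
          exact ht2
      have hq2 : qm N C Δt m₁ (t - τ) = ((i : ℕ) : ℤ) := by
        apply qm_eq N C Δt hN hC hΔt hm₁ (by omega : i ≤ C)
        · linarith
        · have hv : tp N C Δt m₁ (i+1) = ((i:ℝ) + 1) * s - (m₁:ℝ) * e := by
            rw [tp_eq' N C Δt m₁ _ (by omega) (by omega : i+1 ≤ C), ← hs, ← he]
            push_cast; ring
          rw [hv]
          linarith
      have hr1 : 0 ≤ t ∧ t < T N Δt := by
        constructor
        · linarith
        · linarith [mul_le_mul_of_nonneg_right hikC hs0.le]
      have hr2 : 0 ≤ t - τ ∧ t - τ < T N Δt := ⟨by linarith, by linarith [hr1.2]⟩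
      simp only [hF]
      unfold phi
      rw [if_pos hr1, if_pos hr2, hq1, hq2, conj_exp_two_pi_I,
        show -(2 * Real.pi * Complex.I * ((ν * t : ℝ) : ℂ))
          = 2 * Real.pi * Complex.I * ((-(ν * t) : ℝ) : ℂ) from by push_cast; ring,
        exp_two_pi_I_add, exp_two_pi_I_add]
      congr 1
      congr 1
      norm_cast
      rw [hc1]
      push_cast
      ring
    rw [intervalIntegral_congr_Ioo hab heq, integral_exp_linear, exp_split, ← hP]
    ring
  -- piece 2
  have piece2 : ∀ i, i < n → (∫ t in (tp N C Δt m (i + (k+1)))..(tp N C Δt m₁ (i+1) + τ), F t)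
      = P * (Complex.exp (-(2 * Real.pi * Complex.I * ((((i : ℝ) / Δt) * τ : ℝ) : ℂ)))
          * Iind c2v (tp N C Δt m (i + (k + 1))) (tp N C Δt m₁ (i + 1) + τ)) := by
    intro i hi
    have hik1 : i + (k+1) ≤ C := by omega
    have hBv : tp N C Δt m (i + (k+1)) = ((i:ℝ) + ((k:ℝ)+1)) * s - (m:ℝ) * e := by
      rw [tp_eq' N C Δt m _ (by omega) hik1, ← hs, ← he]
      push_cast; ring
    have hA'v : tp N C Δt m₁ (i+1) = ((i:ℝ) + 1) * s - (m₁:ℝ) * e := by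
      rw [tp_eq' N C Δt m₁ _ (by omega) (by omega : i+1 ≤ C), ← hs, ← he]
      push_cast; ring
    have hAub : tp N C Δt m₁ i ≤ (i:ℝ) * s := by
      have h := tp_ub N C Δt hN hC hΔt m₁ i (by omega)
      rw [← hs] at h; exact h
    have hA0 : 0 ≤ tp N C Δt m₁ i := tp_nonneg N C Δt hC hΔt hm₁ i
    have hi1n : (i:ℝ) + 1 ≤ (n:ℝ) := by exact_mod_cast hi
    have hab : tp N C Δt m (i + (k+1)) ≤ tp N C Δt m₁ (i+1) + τ := by
      rw [hBv, hA'v]; linarith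
    have heq : Set.EqOn F (fun t => Complex.exp (2 * Real.pi * Complex.I *
        ((c2v * t + (c₂ * ((m : ℝ) ^ 2 - (m₁ : ℝ) ^ 2) + ((m₁ : ℝ) / T N Δt) * τ
          - ctil N C Δt * τ ^ 2 - ((i : ℝ) / Δt) * τ) : ℝ) : ℂ)))
        (Set.Ioo (tp N C Δt m (i + (k+1))) (tp N C Δt m₁ (i+1) + τ)) := by
      intro t ht
      obtain ⟨ht1, ht2⟩ := ht
      rw [hBv] at ht1
      rw [hA'v] at ht2
      have hq1 : qm N C Δt m t = ((i + (k+1) : ℕ) : ℤ) := by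
        apply qm_eq N C Δt hN hC hΔt hm hik1
        · rw [hBv]; linarith
        · rcases Nat.lt_or_ge (i+1) n with hin | hin
          · have hv : tp N C Δt m (i+(k+1)+1) = (((i:ℝ) + ((k:ℝ)+1)) + 1) * s - (m:ℝ) * e := by
              rw [tp_eq' N C Δt m _ (by omega) (by omega), ← hs, ← he]
              push_cast; ring
            rw [hv]
            linarith
          · have hin' : i + 1 = n := by omega
            have hv : tp N C Δt m (i+(k+1)+1) = T N Δt := tp_top N C Δt m _ (by omega)
            have hi1n' : ((i:ℝ) + 1) * s = (n:ℝ) * s := by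
              have : (i:ℝ) + 1 = (n:ℝ) := by exact_mod_cast hin'
              rw [this]
            rw [hv]
            linarith [hτu1, hx, hCs]
      have hq2 : qm N C Δt m₁ (t - τ) = ((i : ℕ) : ℤ) := by
        apply qm_eq N C Δt hN hC hΔt hm₁ (by omega : i ≤ C)
        · linarith
        · have hv : tp N C Δt m₁ (i+1) = ((i:ℝ) + 1) * s - (m₁:ℝ) * e := hA'v
          rw [hv]
          linarith
      have his0 : 0 ≤ ((i:ℝ) + (k:ℝ)) * s :=
        mul_nonneg (by positivity) hs0.le
      have his1 : ((i:ℝ) + 1 + (k:ℝ)) * s ≤ ((k:ℝ) + (n:ℝ)) * s :=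
        mul_le_mul_of_nonneg_right (by linarith) hs0.le
      have hr1 : 0 ≤ t ∧ t < T N Δt := by
        constructor
        · linarith
        · linarith [hτu1, hx, hCs]
      have hr2 : 0 ≤ t - τ ∧ t - τ < T N Δt := ⟨by linarith, by linarith [hr1.2]⟩
      simp only [hF]
      unfold phi
      rw [if_pos hr1, if_pos hr2, hq1, hq2, conj_exp_two_pi_I,
        show -(2 * Real.pi * Complex.I * ((ν * t : ℝ) : ℂ))
          = 2 * Real.pi * Complex.I * ((-(ν * t) : ℝ) : ℂ) from by push_cast; ring,
        exp_two_pi_I_add, exp_two_pi_I_add]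
      congr 1
      congr 1
      norm_cast
      rw [hc2v]
      push_cast
      ring
    rw [intervalIntegral_congr_Ioo hab heq, integral_exp_linear, exp_split, ← hP]
    ring
  -- piece 3
  have piece3 : (∫ t in (tp N C Δt m₁ n + τ)..(T N Δt), F t)
      = P * (Complex.exp (-(2 * Real.pi * Complex.I * (((n : ℝ) / Δt * τ : ℝ) : ℂ)))
          * Iind c1 (tp N C Δt m₁ n + τ) (T N Δt)) := by
    have hA'v : tp N C Δt m₁ n = (n:ℝ) * s - (m₁:ℝ) * e := by
      rw [tp_eq' N C Δt m₁ _ (by omega) (by omega : n ≤ C), ← hs, ← he]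
    have hA0 : 0 ≤ tp N C Δt m₁ n := tp_nonneg N C Δt hC hΔt hm₁ n
    have hab : tp N C Δt m₁ n + τ ≤ T N Δt := by
      rw [hA'v]; linarith [hτu1, hx, hCs]
    have heq : Set.EqOn F (fun t => Complex.exp (2 * Real.pi * Complex.I *
        ((c1 * t + (c₂ * ((m : ℝ) ^ 2 - (m₁ : ℝ) ^ 2) + ((m₁ : ℝ) / T N Δt) * τ
          - ctil N C Δt * τ ^ 2 - (n : ℝ) / Δt * τ) : ℝ) : ℂ)))
        (Set.Ioo (tp N C Δt m₁ n + τ) (T N Δt)) := by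
      intro t ht
      obtain ⟨ht1, ht2⟩ := ht
      rw [hA'v] at ht1
      have hq1 : qm N C Δt m t = ((C : ℕ) : ℤ) := by
        apply qm_eq N C Δt hN hC hΔt hm le_rfl
        · have hv : tp N C Δt m C = (C:ℝ) * s - (m:ℝ) * e := by
            rw [tp_eq' N C Δt m _ (by omega) le_rfl, ← hs, ← he]
          rw [hv]
          linarith [hx, hCs]
        · rw [tp_top N C Δt m (C+1) (by omega)]
          exact ht2
      have hq2 : qm N C Δt m₁ (t - τ) = ((n : ℕ) : ℤ) := by
        apply qm_eq N C Δt hN hC hΔt hm₁ (by omega : n ≤ C)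
        · linarith
        · rcases Nat.eq_zero_or_pos k with hk0 | hk0
          · rw [tp_top N C Δt m₁ (n+1) (by omega)]
            linarith
          · have hv : tp N C Δt m₁ (n+1) = ((n:ℝ) + 1) * s - (m₁:ℝ) * e := by
              rw [tp_eq' N C Δt m₁ _ (by omega) (by omega : n+1 ≤ C), ← hs, ← he]
              push_cast; ring
            rw [hv]
            linarith [hτl, hCs, hx, hm1s]
      have hr1 : 0 ≤ t ∧ t < T N Δt := ⟨by linarith, ht2⟩
      have hr2 : 0 ≤ t - τ ∧ t - τ < T N Δt := ⟨by linarith, by linarith⟩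
      simp only [hF]
      unfold phi
      rw [if_pos hr1, if_pos hr2, hq1, hq2, conj_exp_two_pi_I,
        show -(2 * Real.pi * Complex.I * ((ν * t : ℝ) : ℂ))
          = 2 * Real.pi * Complex.I * ((-(ν * t) : ℝ) : ℂ) from by push_cast; ring,
        exp_two_pi_I_add, exp_two_pi_I_add]
      congr 1
      congr 1
      norm_cast
      rw [hc1, ← hknR]
      push_cast
      ring
    rw [intervalIntegral_congr_Ioo hab heq, integral_exp_linear, exp_split, ← hP]
    ring
  -- assembly
  rw [hdecomp, Finset.sum_range_succ,
    sum_pair (fun j => ∫ t in (u j)..(u (j+1)), F t) n]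
  beta_reduce
  rw [hue n le_rfl, hulast, piece3]
  have hsum : (∑ i ∈ Finset.range n,
      ((∫ t in (u (2*i))..(u (2*i+1)), F t) + ∫ t in (u (2*i+1))..(u (2*i+1+1)), F t))
      = ∑ i ∈ Finset.range n, P *
        (Complex.exp (-(2 * Real.pi * Complex.I * ((((i : ℝ) / Δt) * τ : ℝ) : ℂ))) *
          (Iind c1 (tp N C Δt m₁ i + τ) (tp N C Δt m (i + (k + 1))) +
           Iind c2v (tp N C Δt m (i + (k + 1))) (tp N C Δt m₁ (i + 1) + τ))) := by
    refine Finset.sum_congr rfl (fun i hi => ?_)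
    have hi' : i < n := Finset.mem_range.mp hi
    rw [hue i hi'.le, huo i hi', show 2*i+1+1 = 2*(i+1) from by ring, hue (i+1) (by omega),
      piece1 i hi', piece2 i hi']
    ring
  rw [hsum, mul_add, Finset.mul_sum]
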